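/- Assume n > 0 or m > 2. The structure 𝔄 has no near-unanimity polymorphism of arity k for any k with 3 ≤ k ≤ m^{2^n}. -/

import Mathlib

/- The universe `A = {a, 0, 1, ..., n}` of size `n+2` is encoded as `Fin (n+2)`,
where `a` is encoded as `0` and the element `i ∈ {0, ..., n}` is encoded as `i+1`;
this encoding is order-preserving for the order `a < 0 < 1 < ⋯ < n`. -/

/-- A `k`-ary operation `t` is compatible with (preserves) an `r`-ary relation `S`:
applying `t` coordinatewise to `k` tuples from `S` yields a tuple in `S`. -/
def Compat {A : Type*} {k r : ℕ} (t : (Fin k → A) → A) (S : Set (Fin r → A)) : Prop :=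
  ∀ u : Fin k → Fin r → A, (∀ j, u j ∈ S) → (fun i => t fun j => u j i) ∈ S

/-- Compatibility with a unary relation `X`: `t` maps `X^k` into `X`. -/
def CompatUnary {A : Type*} {k : ℕ} (t : (Fin k → A) → A) (X : Set A) : Prop :=
  ∀ u : Fin k → A, (∀ j, u j ∈ X) → t u ∈ X

/-- Compatibility with a binary relation, given as a set of pairs. -/
def Compat2 {A : Type*} {k : ℕ} (t : (Fin k → A) → A) (S : Set (A × A)) : Prop :=
  ∀ u w : Fin k → A, (∀ j, (u j, w j) ∈ S) → (t u, t w) ∈ S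

/-- An operation `t : A^k → A` is a near-unanimity (NU) operation if `k ≥ 3` and
any tuple whose coordinates all equal `x` except possibly one coordinate (with
value `y`) is mapped to the majority value `x`. -/
def IsNU {A : Type*} {k : ℕ} (t : (Fin k → A) → A) : Prop :=
  3 ≤ k ∧ ∀ (x y : A) (j : Fin k), t (Function.update (fun _ => x) j y) = x

/-- The `(m+1)`-ary relation `S_i`: all tuples `(x_0, …, x_m)` with
`x_0 ∈ {a,0,…,i-1}` (encoded value `≤ i`) and `x_1, …, x_m ∈ {a, i}` (encoded value
`0` or `i+1`), except the tuple `(a, i, …, i)`, together with the constant tuples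
`(j, …, j)` for `j ∈ {i+1, …, n}` (encoded value `≥ i+2`). -/
def Srel (n m i : ℕ) : Set (Fin (m + 1) → Fin (n + 2)) :=
  {x | ((x 0).val ≤ i ∧ (∀ j, j ≠ 0 → ((x j).val = 0 ∨ (x j).val = i + 1)) ∧
          ¬((x 0).val = 0 ∧ ∀ j, j ≠ 0 → (x j).val = i + 1)) ∨
        (∃ c : Fin (n + 2), i + 2 ≤ c.val ∧ ∀ j, x j = c)}

/-- A polymorphism of the structure `𝔄 = (A; S_0, …, S_n, (X)_{∅ ≠ X ⊆ A})`:
an operation compatible with each `S_i` and with every nonempty unary relation. -/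
def PolyA (n m : ℕ) {k : ℕ} (t : (Fin k → Fin (n + 2)) → Fin (n + 2)) : Prop :=
  (∀ i ≤ n, Compat t (Srel n m i)) ∧
  (∀ X : Set (Fin (n + 2)), X.Nonempty → CompatUnary t X)

namespace Stmt7Aux

lemma sum_range_two_pow (μ : ℕ) : (Finset.range μ).sum (fun v => 2 ^ v) = 2 ^ μ - 1 := by
  induction μ with
  | zero => simp
  | succ μ ih =>
    rw [Finset.sum_range_succ, ih]
    have h1 : 1 ≤ 2 ^ μ := Nat.one_le_two_pow
    have : 2 ^ (μ + 1) = 2 ^ μ + 2 ^ μ := by ring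
    omega

/-- rank of `j` inside a finset `Z` of `Fin k` -/
noncomputable def rk {k : ℕ} (Z : Finset (Fin k)) (j : Fin k) : ℕ :=
  (Z.filter (fun x => x < j)).card

lemma rk_lt {k : ℕ} (Z : Finset (Fin k)) {j : Fin k} (hj : j ∈ Z) : rk Z j < Z.card := by
  apply Finset.card_lt_card
  rw [Finset.ssubset_iff_of_subset (Finset.filter_subset _ _)]
  exact ⟨j, hj, by simp⟩

lemma rk_injOn {k : ℕ} (Z : Finset (Fin k)) :
    ∀ j ∈ Z, ∀ j' ∈ Z, rk Z j = rk Z j' → j = j' := by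
  have key : ∀ j ∈ Z, ∀ j' ∈ Z, j < j' → rk Z j < rk Z j' := by
    intro j hj j' _ hlt
    apply Finset.card_lt_card
    rw [Finset.ssubset_iff_of_subset]
    · exact ⟨j, Finset.mem_filter.2 ⟨hj, hlt⟩, by simp⟩
    · intro x hx
      rw [Finset.mem_filter] at hx ⊢
      exact ⟨hx.1, lt_trans hx.2 hlt⟩
  intro j hj j' hj' heq
  rcases lt_trichotomy j j' with h | h | h
  · exact absurd heq (Nat.ne_of_lt (key j hj j' hj' h))
  · exact h
  · exact absurd heq.symm (Nat.ne_of_lt (key j' hj' j hj h))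

/-- The key inductive lemma: if `t` is conservative, compatible with all `Srel n m i`,
and near-unanimous, then `t C ≠ 0` for every tuple `C` whose set of `0`-coordinates
is suitably small compared with the weight of the set `V` of (decoded) nonzero values
occurring in `C`. -/
lemma key (n m k : ℕ) (hm : 2 ≤ m) (hk0 : 0 < k)
    (t : (Fin k → Fin (n + 2)) → Fin (n + 2))
    (hS : ∀ i ≤ n, Compat t (Srel n m i))
    (hU : ∀ X : Set (Fin (n + 2)), X.Nonempty → CompatUnary t X)
    (hNU : ∀ (x y : Fin (n + 2)) (j : Fin k), t (Function.update (fun _ => x) j y) = x) :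
    ∀ (d : ℕ) (V : Finset ℕ), (∀ v ∈ V, v < n + 1) →
      2 ^ (n + 1) ≤ (V.sum fun v => 2 ^ v) + d →
      ∀ C : Fin k → Fin (n + 2), (∀ j, C j ≠ 0 → ((C j : ℕ) - 1) ∈ V) →
      (Finset.univ.filter (fun j => C j = 0)).card * m ^ (V.sum fun v => 2 ^ v) ≤ m ^ (2 ^ n) →
      t C ≠ 0 := by
  have hcons : ∀ C : Fin k → Fin (n + 2), ∃ j, t C = C j := by
    intro C
    have h := hU (Set.range C) ⟨C ⟨0, hk0⟩, Set.mem_range_self _⟩ C (fun j => Set.mem_range_self j)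
    obtain ⟨j, hj⟩ := h
    exact ⟨j, hj.symm⟩
  intro d
  induction d with
  | zero =>
    intro V hV hd C _ _
    exfalso
    have hsub : V ⊆ Finset.range (n + 1) := fun v hv => Finset.mem_range.2 (hV v hv)
    have hle : (V.sum fun v => 2 ^ v) ≤ (Finset.range (n + 1)).sum (fun v => 2 ^ v) :=
      Finset.sum_le_sum_of_subset hsub
    rw [sum_range_two_pow] at hle
    have h1 : 1 ≤ 2 ^ (n + 1) := Nat.one_le_two_pow
    omega
  | succ d ih =>
    intro V hV hd C hvals hcard
    set w : ℕ := V.sum fun v => 2 ^ v with hw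
    set Z : Finset (Fin k) := Finset.univ.filter (fun j => C j = 0) with hZ
    -- Case A : Z = ∅
    by_cases hZ0 : Z.card = 0
    · rw [Finset.card_eq_zero] at hZ0
      obtain ⟨j, hj⟩ := hcons C
      intro h0
      have : C j = 0 := by rw [← hj]; exact h0
      have : j ∈ Z := by rw [hZ]; simp [this]
      rw [hZ0] at this; simp at this
    -- Z nonempty
    have hZpos : 1 ≤ Z.card := Nat.one_le_iff_ne_zero.2 hZ0
    by_cases hwbig : 2 ^ n ≤ w
    · -- Case B : NU case; here w = 2^n, V = {n}, Z.card = 1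
      have hmw : m ^ (2 ^ n) ≤ m ^ w := Nat.pow_le_pow_right (by omega) hwbig
      have hZ1 : Z.card = 1 := by
        have h1 : Z.card * m ^ w ≤ 1 * m ^ w := by
          rw [one_mul]; exact le_trans hcard hmw
        have h2 : Z.card ≤ 1 :=
          Nat.le_of_mul_le_mul_right h1 (Nat.pow_pos (by omega))
        omega
      have hweq : w = 2 ^ n := by
        by_contra hne
        have hlt : 2 ^ n < w := by omega
        have h4 : m ^ (2 ^ n) < m ^ w := Nat.pow_lt_pow_right (by omega) hlt
        have h3 : m ^ w ≤ Z.card * m ^ w := Nat.le_mul_of_pos_left _ hZpos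
        omega
      -- V = {n}
      have hnV : n ∈ V := by
        by_contra hn
        have hsub : V ⊆ Finset.range n := by
          intro v hv
          have := hV v hv
          rcases Nat.lt_or_ge v n with h | h
          · exact Finset.mem_range.2 h
          · exfalso; have : v = n := by omega
            exact hn (this ▸ hv)
        have hle : w ≤ (Finset.range n).sum (fun v => 2 ^ v) :=
          Finset.sum_le_sum_of_subset hsub
        rw [sum_range_two_pow] at hle
        have h1 : 1 ≤ 2 ^ n := Nat.one_le_two_pow
        omega
      have hVn : V = {n} := by
        have herase : ((V.erase n).sum fun v => 2 ^ v) = 0 := by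
          have h2 : ((V.erase n).sum fun v => 2 ^ v) + 2 ^ n = w := by
            rw [hw]; exact Finset.sum_erase_add V _ hnV
          omega
        have hempty : V.erase n = ∅ := by
          by_contra hne
          obtain ⟨v, hv⟩ := Finset.nonempty_iff_ne_empty.2 hne
          have hle : 2 ^ v ≤ ((V.erase n).sum fun v => 2 ^ v) :=
            Finset.single_le_sum (fun i _ => Nat.zero_le _) hv
          have h1 : 1 ≤ 2 ^ v := Nat.one_le_two_pow
          omega
        rcases (Finset.erase_eq_empty_iff V n).1 hempty with h | h
        · exfalso; rw [h] at hnV; simp at hnV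
        · exact h
      obtain ⟨j₀, hj₀⟩ := Finset.card_eq_one.1 hZ1
      have hj₀Z : j₀ ∈ Z := by rw [hj₀]; simp
      have hCj₀ : C j₀ = 0 := by
        rw [hZ] at hj₀Z; simpa using hj₀Z
      have hen : (n + 1 : ℕ) < n + 2 := by omega
      set en : Fin (n + 2) := ⟨n + 1, hen⟩ with hen'
      have hCeq : C = Function.update (fun _ => en) j₀ 0 := by
        funext j
        by_cases hjj : j = j₀
        · subst hjj; rw [Function.update_self]; exact hCj₀
        · rw [Function.update_of_ne hjj]
          have hjZ : j ∉ Z := by rw [hj₀]; simp [hjj]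
          have hCj : C j ≠ 0 := by
            intro h; exact hjZ (by rw [hZ]; simp [h])
          have hv := hvals j hCj
          rw [hVn, Finset.mem_singleton] at hv
          have hne0 : (C j : ℕ) ≠ 0 := by
            intro h; exact hCj (Fin.ext (by simp [h]))
          have : (C j : ℕ) = n + 1 := by omega
          exact Fin.ext (by simp [this, hen'])
      rw [hCeq, hNU en 0 j₀]
      intro h
      have : (en : ℕ) = 0 := by rw [h]; simp
      simp [hen'] at this
    · -- Case C : the matrix step
      push_neg at hwbig
      -- find μ = least value ≤ n not in V
      have hex : ∃ v, v ∉ V ∧ v < n + 1 := by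
        by_contra hno
        push_neg at hno
        have hsub : Finset.range (n + 1) ⊆ V := by
          intro v hv
          by_contra h
          exact absurd (Finset.mem_range.1 hv) (not_lt.2 (hno v h))
        have hle : (Finset.range (n + 1)).sum (fun v => 2 ^ v) ≤ w :=
          Finset.sum_le_sum_of_subset hsub
        rw [sum_range_two_pow] at hle
        have h1 : 1 ≤ 2 ^ n := Nat.one_le_two_pow
        have : 2 ^ (n + 1) = 2 ^ n + 2 ^ n := by ring
        omega
      set μ : ℕ := Nat.find hex with hμ
      obtain ⟨hμV, hμn⟩ : μ ∉ V ∧ μ < n + 1 := Nat.find_spec hex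
      have hμmin : ∀ v < μ, v ∈ V := by
        intro v hv
        by_contra hvV
        exact absurd (Nat.find_le ⟨hvV, by omega⟩) (not_le.2 hv)
      -- V' and its weight
      set V' : Finset ℕ := insert μ (V.filter (fun v => μ < v)) with hV'
      have hV'range : ∀ v ∈ V', v < n + 1 := by
        intro v hv
        rw [hV', Finset.mem_insert] at hv
        rcases hv with h | h
        · omega
        · exact hV v (Finset.mem_filter.1 h).1
      have hwV' : (V'.sum fun v => 2 ^ v) = w + 1 := by
        have hμf : μ ∉ V.filter (fun v => μ < v) := by simp
        rw [hV', Finset.sum_insert hμf]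
        have hsplit := Finset.sum_filter_add_sum_filter_not V (fun v => v < μ) (fun v => 2 ^ v)
        have hflt : V.filter (fun v => v < μ) = Finset.range μ := by
          ext v
          simp only [Finset.mem_filter, Finset.mem_range]
          exact ⟨fun h => h.2, fun h => ⟨hμmin v h, h⟩⟩
        have hfgt : V.filter (fun v => ¬ v < μ) = V.filter (fun v => μ < v) := by
          apply Finset.filter_congr
          intro v hv
          simp only [not_lt, eq_iff_iff]
          constructor
          · intro h
            rcases Nat.lt_or_ge μ v with h' | h'
            · exact h'
            · exfalso; have : v = μ := by omega
              exact hμV (this ▸ hv)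
          · omega
        rw [hflt, hfgt, sum_range_two_pow] at hsplit
        have h1 : 1 ≤ 2 ^ μ := Nat.one_le_two_pow
        omega
      -- sizes
      set q : ℕ := m ^ (2 ^ n - w - 1) with hq'
      have hqpos : 0 < q := Nat.pow_pos (by omega)
      have hpow : m ^ (2 ^ n) = m * q * m ^ w := by
        rw [hq', ← pow_succ']
        rw [← pow_add]
        congr 1
        omega
      have hZle : Z.card ≤ m * q := by
        have h1 := hcard
        rw [hpow] at h1
        exact Nat.le_of_mul_le_mul_right h1 (Nat.pow_pos (by omega))
      -- parts
      set A : Fin m → Finset (Fin k) := fun p => Z.filter (fun j => rk Z j / q = p.val) with hA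
      have hcover : ∀ j ∈ Z, ∃ p : Fin m, j ∈ A p := by
        intro j hj
        have h1 : rk Z j < m * q := lt_of_lt_of_le (rk_lt Z hj) hZle
        have h2 : rk Z j / q < m := by
          rw [Nat.div_lt_iff_lt_mul hqpos]
          omega
        exact ⟨⟨rk Z j / q, h2⟩, by rw [hA]; exact Finset.mem_filter.2 ⟨hj, rfl⟩⟩
      have hAcard : ∀ p : Fin m, (A p).card ≤ q := by
        intro p
        have : (A p).card ≤ (Finset.Ico (p.val * q) (p.val * q + q)).card := by
          apply Finset.card_le_card_of_injOn (rk Z)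
          · intro j hj
            simp only [Finset.mem_coe, hA, Finset.mem_filter] at hj
            obtain ⟨hjZ, hjq⟩ := hj
            rw [Finset.mem_coe, Finset.mem_Ico]
            have hdm : q * p.val + rk Z j % q = rk Z j := by
              conv_rhs => rw [← Nat.div_add_mod (rk Z j) q]
              rw [hjq]
            have h1 : q * p.val ≤ rk Z j := Nat.le.intro hdm
            have h2 : rk Z j < q * p.val + q := by
              have h3 := Nat.add_lt_add_left (Nat.mod_lt (rk Z j) hqpos) (q * p.val)
              rw [hdm] at h3
              exact h3
            refine ⟨by rw [Nat.mul_comm]; exact h1, by rw [Nat.mul_comm p.val q]; exact h2⟩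
          · intro x hx y hy hxy
            have hx' : x ∈ A p := Finset.mem_coe.1 hx
            have hy' : y ∈ A p := Finset.mem_coe.1 hy
            rw [hA] at hx' hy'
            exact rk_injOn Z x (Finset.mem_filter.1 hx').1 y (Finset.mem_filter.1 hy').1 hxy
        rw [Nat.card_Ico] at this
        omega
      -- the element μ (encoded μ+1)
      have hμlt : μ + 1 < n + 2 := by omega
      set eμ : Fin (n + 2) := ⟨μ + 1, hμlt⟩ with heμ
      -- the matrix
      set u : Fin k → Fin (m + 1) → Fin (n + 2) := fun j i =>
        if hi : (i : ℕ) = 0 then C j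
        else if (C j : ℕ) ≤ μ then
          (if j ∈ A ⟨(i : ℕ) - 1, by have := i.isLt; omega⟩ then 0 else eμ)
        else C j with hu
      -- values of C above μ are ≥ μ+2
      have hCbig : ∀ j : Fin k, ¬ (C j : ℕ) ≤ μ → μ + 2 ≤ (C j : ℕ) := by
        intro j hj
        push_neg at hj
        by_contra hcon
        have h1 : (C j : ℕ) = μ + 1 := by omega
        have hCj : C j ≠ 0 := by
          intro h; rw [h] at h1; simp at h1
        have := hvals j hCj
        rw [h1] at this
        simp at this
        exact hμV this
      -- rows are in Srel n m μ
      have hrows : ∀ j, u j ∈ Srel n m μ := by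
        intro j
        by_cases hj : (C j : ℕ) ≤ μ
        · left
          refine ⟨?_, ?_, ?_⟩
          · have : u j 0 = C j := by simp [hu]
            rw [this]; exact hj
          · intro i hi
            have hi' : (i : ℕ) ≠ 0 := by
              intro h; exact hi (Fin.ext (by simp [h]))
            simp only [hu]
            rw [dif_neg hi', if_pos hj]
            by_cases hmem : j ∈ A ⟨(i : ℕ) - 1, by have := i.isLt; omega⟩
            · rw [if_pos hmem]; left; simp
            · rw [if_neg hmem]; right; simp [heμ]
          · rintro ⟨h0, hall⟩
            have hu0 : u j 0 = C j := by simp [hu]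
            rw [hu0] at h0
            have hCj0 : C j = 0 := Fin.ext (by simp [h0])
            have hjZ : j ∈ Z := by rw [hZ]; simp [hCj0]
            obtain ⟨p, hp⟩ := hcover j hjZ
            have hne : (p.succ : Fin (m + 1)) ≠ 0 := by
              intro h
              have : (p.succ : Fin (m+1)).val = 0 := by rw [h]; simp
              simp [Fin.val_succ] at this
            have := hall p.succ hne
            have hval : u j p.succ = 0 := by
              simp only [hu]
              rw [dif_neg (by simp [Fin.val_succ] : ¬ ((p.succ : Fin (m + 1)) : ℕ) = 0)]
              rw [if_pos hj]
              simp only [Fin.val_succ, Nat.add_sub_cancel, Fin.eta]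
              rw [if_pos hp]
            rw [hval] at this
            simp at this
        · right
          refine ⟨C j, hCbig j hj, ?_⟩
          intro i
          simp only [hu]
          by_cases hi : (i : ℕ) = 0
          · rw [dif_pos hi]
          · rw [dif_neg hi, if_neg hj]
      -- apply compatibility
      have hO := hS μ (by omega) u hrows
      -- column 0 is C
      have hcol0 : (fun j => u j 0) = C := by
        funext j; simp [hu]
      -- column p.succ is D p
      set D : Fin m → Fin k → Fin (n + 2) := fun p j =>
        if (C j : ℕ) ≤ μ then (if j ∈ A p then 0 else eμ) else C j with hD
      have hcolp : ∀ i : Fin (m + 1), (i : ℕ) ≠ 0 →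
          (fun j => u j i) = D ⟨(i : ℕ) - 1, by have := i.isLt; omega⟩ := by
        intro i hi
        funext j
        simp only [hu, hD]
        rw [dif_neg hi]
      -- each D p maps to nonzero under t (by induction hypothesis)
      have hDnz : ∀ p : Fin m, t (D p) ≠ 0 := by
        intro p
        apply ih V' hV'range (by omega)
        · intro j hj
          simp only [hD] at hj
          by_cases hCj : (C j : ℕ) ≤ μ
          · rw [if_pos hCj] at hj
            by_cases hmem : j ∈ A p
            · rw [if_pos hmem] at hj; exact absurd rfl hj
            · rw [if_neg hmem] at hj
              simp only [hD]
              rw [if_pos hCj, if_neg hmem]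
              have : ((eμ : Fin (n+2)) : ℕ) - 1 = μ := by simp [heμ]
              rw [this, hV']
              exact Finset.mem_insert_self _ _
          · rw [if_neg hCj] at hj
            simp only [hD]
            rw [if_neg hCj]
            have hCj0 : C j ≠ 0 := by
              intro h
              apply hCj
              rw [h]; simp
            have hv := hvals j hCj0
            have hbig := hCbig j hCj
            rw [hV']
            apply Finset.mem_insert_of_mem
            rw [Finset.mem_filter]
            exact ⟨hv, by omega⟩
        · have hfilt : Finset.univ.filter (fun j => D p j = 0) = A p := by
            ext j
            simp only [Finset.mem_filter, Finset.mem_univ, true_and]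
            constructor
            · intro hj
              simp only [hD] at hj
              by_cases hCj : (C j : ℕ) ≤ μ
              · rw [if_pos hCj] at hj
                by_cases hmem : j ∈ A p
                · exact hmem
                · rw [if_neg hmem] at hj
                  exfalso
                  have h5 := congrArg Fin.val hj
                  simp [heμ] at h5
              · rw [if_neg hCj] at hj
                exfalso
                have := hCbig j hCj
                rw [hj] at this
                simp at this
            · intro hj
              have hjZ : j ∈ Z := by
                rw [hA] at hj
                exact (Finset.mem_filter.1 hj).1
              have hCj : C j = 0 := by
                rw [hZ] at hjZ
                simpa using hjZ
              simp only [hD]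
              rw [if_pos (by simp [hCj] : (C j : ℕ) ≤ μ), if_pos hj]
          rw [hfilt, hwV']
          calc (A p).card * m ^ (w + 1) ≤ q * m ^ (w + 1) :=
                Nat.mul_le_mul_right _ (hAcard p)
            _ = m ^ (2 ^ n) := by
                rw [hq', ← pow_add]
                congr 1
                omega
      -- conclude
      intro h0
      have hO0 : (fun i => t fun j => u j i) 0 = 0 := by
        simp only [hcol0]
        exact h0
      rcases hO with ⟨h1, h2, h3⟩ | ⟨c, hc, hall⟩
      · apply h3
        constructor
        · rw [hO0]; simp
        · intro i hi
          have hi' : (i : ℕ) ≠ 0 := by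
            intro h; exact hi (Fin.ext (by simp [h]))
          rcases h2 i hi with h | h
          · exfalso
            have := hcolp i hi'
            have hnz := hDnz ⟨(i : ℕ) - 1, by have := i.isLt; omega⟩
            rw [← this] at hnz
            exact hnz (Fin.ext (by simp [h]))
          · exact h
      · have := hall 0
        rw [hO0] at this
        rw [← this] at hc
        simp at hc

end Stmt7Aux

/-- For `n > 0` or `m > 2`, the structure `𝔄` has no NU polymorphism of arity `k`
for any `3 ≤ k ≤ m^(2^n)`. -/
theorem stmt7 (n m : ℕ) (hm : 2 ≤ m) (hnm : 0 < n ∨ 2 < m)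
    (k : ℕ) (hk3 : 3 ≤ k) (hk : k ≤ m ^ 2 ^ n) :
    ¬ ∃ t : (Fin k → Fin (n + 2)) → Fin (n + 2), PolyA n m t ∧ IsNU t := by
  rintro ⟨t, ⟨hS, hU⟩, ⟨-, hNU⟩⟩
  have hk0 : 0 < k := by omega
  have hkey := Stmt7Aux.key n m k hm hk0 t hS hU hNU (2 ^ (n + 1)) ∅ (by simp)
    (by simp) (fun _ => 0) (by intro j h; exact absurd rfl h)
    (by simpa using hk)
  apply hkey
  have : (fun _ : Fin k => (0 : Fin (n + 2))) =
      Function.update (fun _ => (0 : Fin (n + 2))) ⟨0, hk0⟩ 0 := by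
    rw [Function.update_eq_self]
  rw [this]
  exact hNU 0 0 _
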